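/- Let H be a finite group, U, V finite-dimensional orthogonal H-representations, and ε a one-dimensional orthogonal H-representation. The map sending a pair (f, v), where f : U → V is a linear isometric embedding and v ∈ ε ⊗ (im f)^⊥ is a vector of the twisted orthogonal complement, to the linear isometric embedding U ⊕ ε → V restricting to f on U and corresponding to v on ε (via the isomorphism ε ⊗ V ≅ Hom(ε, V), rescaled to be an isometry on the unit sphere), defines an H-equivariant homeomorphism between the unit sphere bundle Sγ_{H,ε}(U,V) and the space of linear isometric embeddings Mor_H(U ⊕ ε, V). -/

import Mathlib

/-- The unit sphere bundle `Sγ_{H,ε}(U,V)`: pairs of a linear isometric embedding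
`f : U → V` together with a unit vector of `ε ⊗ (im f)^⊥`, encoded (via
`ε ⊗ V ≅ Hom(ε,V)`) as a linear isometric map `E → V` whose image is orthogonal to the
image of `f`.  Continuous linear maps are used so that the total space carries its
natural topology. -/
abbrev SphereBundle (U E V : Type) [NormedAddCommGroup U] [InnerProductSpace ℝ U]
    [NormedAddCommGroup E] [InnerProductSpace ℝ E]
    [NormedAddCommGroup V] [InnerProductSpace ℝ V] : Type :=
  {p : (U →L[ℝ] V) × (E →L[ℝ] V) //
    Isometry p.1 ∧ Isometry p.2 ∧ ∀ (u : U) (e : E), @inner ℝ V _ (p.1 u) (p.2 e) = 0}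

/-- The Stiefel space `Mor_H(U ⊕ ε, V)` of linear isometric embeddings `U ⊕ E → V`,
where `U ⊕ E` carries the orthogonal direct sum inner product. -/
abbrev MorSum (U E V : Type) [NormedAddCommGroup U] [InnerProductSpace ℝ U]
    [NormedAddCommGroup E] [InnerProductSpace ℝ E]
    [NormedAddCommGroup V] [InnerProductSpace ℝ V] : Type :=
  {F : WithLp 2 (U × E) →L[ℝ] V // Isometry F}

set_option linter.unusedSectionVars false

section Aux
variable {U E V : Type} [NormedAddCommGroup U] [InnerProductSpace ℝ U] [FiniteDimensional ℝ U]
    [NormedAddCommGroup E] [InnerProductSpace ℝ E] [FiniteDimensional ℝ E]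
    [NormedAddCommGroup V] [InnerProductSpace ℝ V] [FiniteDimensional ℝ V]

noncomputable def toMorL : ((U →L[ℝ] V) × (E →L[ℝ] V)) →ₗ[ℝ] (WithLp 2 (U × E) →L[ℝ] V) where
  toFun p := (p.1.coprod p.2).comp (WithLp.prodContinuousLinearEquiv 2 ℝ U E).toContinuousLinearMap
  map_add' p q := by ext x <;> simp <;> abel
  map_smul' c p := by ext x <;> simp

lemma toMorL_apply (p : (U →L[ℝ] V) × (E →L[ℝ] V)) (x : WithLp 2 (U × E)) :
    toMorL p x = p.1 x.fst + p.2 x.snd := rfl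

noncomputable def fromMorL : (WithLp 2 (U × E) →L[ℝ] V) →ₗ[ℝ] ((U →L[ℝ] V) × (E →L[ℝ] V)) where
  toFun F := (F.comp ((WithLp.prodContinuousLinearEquiv 2 ℝ U E).symm.toContinuousLinearMap.comp
      (ContinuousLinearMap.inl ℝ U E)),
    F.comp ((WithLp.prodContinuousLinearEquiv 2 ℝ U E).symm.toContinuousLinearMap.comp
      (ContinuousLinearMap.inr ℝ U E)))
  map_add' F G := by ext x <;> simp
  map_smul' c F := by ext x <;> simp

lemma fromMorL_fst (F : WithLp 2 (U × E) →L[ℝ] V) (u : U) :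
    (fromMorL F).1 u = F ((WithLp.equiv 2 (U × E)).symm (u, 0)) := rfl

lemma fromMorL_snd (F : WithLp 2 (U × E) →L[ℝ] V) (e : E) :
    (fromMorL F).2 e = F ((WithLp.equiv 2 (U × E)).symm (0, e)) := rfl

lemma decomp (x : WithLp 2 (U × E)) :
    x = (WithLp.equiv 2 (U × E)).symm (x.fst, 0) + (WithLp.equiv 2 (U × E)).symm (0, x.snd) := by
  apply (WithLp.equiv 2 (U × E)).injective
  simp [Prod.ext_iff, WithLp.equiv_symm_apply]

lemma toMorL_isometry (p : (U →L[ℝ] V) × (E →L[ℝ] V))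
    (h1 : Isometry p.1) (h2 : Isometry p.2)
    (h3 : ∀ (u : U) (e : E), @inner ℝ V _ (p.1 u) (p.2 e) = 0) :
    Isometry (toMorL p) := by
  rw [AddMonoidHomClass.isometry_iff_norm]
  intro x
  have h1' := (AddMonoidHomClass.isometry_iff_norm p.1).mp h1
  have h2' := (AddMonoidHomClass.isometry_iff_norm p.2).mp h2
  have := WithLp.prod_norm_sq_eq_of_L2 x
  have key : ‖toMorL p x‖ ^ 2 = ‖x‖ ^ 2 := by
    rw [toMorL_apply, norm_add_sq_real, h3, WithLp.prod_norm_sq_eq_of_L2, h1', h2']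
    ring
  calc ‖toMorL p x‖ = Real.sqrt (‖toMorL p x‖ ^ 2) := (Real.sqrt_sq (norm_nonneg _)).symm
    _ = Real.sqrt (‖x‖ ^ 2) := by rw [key]
    _ = ‖x‖ := Real.sqrt_sq (norm_nonneg _)

lemma fromMorL_mem (F : WithLp 2 (U × E) →L[ℝ] V) (hF : Isometry F) :
    Isometry (fromMorL F).1 ∧ Isometry (fromMorL F).2 ∧
      ∀ (u : U) (e : E), @inner ℝ V _ ((fromMorL F).1 u) ((fromMorL F).2 e) = 0 := by
  have hF' := (AddMonoidHomClass.isometry_iff_norm F).mp hF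
  refine ⟨?_, ?_, ?_⟩
  · rw [AddMonoidHomClass.isometry_iff_norm]
    intro u
    rw [fromMorL_fst, hF', WithLp.equiv_symm_apply, WithLp.norm_toLp_fst]
  · rw [AddMonoidHomClass.isometry_iff_norm]
    intro e
    rw [fromMorL_snd, hF', WithLp.equiv_symm_apply, WithLp.norm_toLp_snd]
  · intro u e
    have h1 : ‖(fromMorL F).1 u‖ = ‖u‖ := by rw [fromMorL_fst, hF', WithLp.equiv_symm_apply, WithLp.norm_toLp_fst]
    have h2 : ‖(fromMorL F).2 e‖ = ‖e‖ := by rw [fromMorL_snd, hF', WithLp.equiv_symm_apply, WithLp.norm_toLp_snd]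
    have hsum : (fromMorL F).1 u + (fromMorL F).2 e = F ((WithLp.equiv 2 (U × E)).symm (u, e)) := by
      rw [fromMorL_fst, fromMorL_snd, ← map_add]
      congr 1
      apply (WithLp.equiv 2 (U × E)).injective
      simp [Prod.ext_iff]
    have hns : ‖(fromMorL F).1 u + (fromMorL F).2 e‖ ^ 2 = ‖u‖ ^ 2 + ‖e‖ ^ 2 := by
      rw [hsum, hF', WithLp.prod_norm_sq_eq_of_L2]
      congr 1 <;> rw [sq_abs] <;> simp [WithLp.equiv_symm_fst, WithLp.equiv_symm_snd]
    have hsq1 : ‖(fromMorL F).1 u‖ ^ 2 = ‖u‖ ^ 2 := by rw [h1]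
    have hsq2 : ‖(fromMorL F).2 e‖ ^ 2 = ‖e‖ ^ 2 := by rw [h2]
    have := norm_add_sq_real ((fromMorL F).1 u) ((fromMorL F).2 e)
    linarith
end Aux


/-- For finite-dimensional orthogonal `H`-representations `U`, `V` and a
one-dimensional orthogonal `H`-representation `ε` (here `E`), the map sending a pair
`(f, v)` (a linear isometric embedding `f : U → V` and a unit vector `v` of
`ε ⊗ (im f)^⊥`) to the linear isometric embedding `U ⊕ ε → V` restricting to `f` on `U`
and corresponding to `v` on `ε` is an `H`-equivariant homeomorphism
`Sγ_{H,ε}(U,V) ≅ Mor_H(U ⊕ ε, V)`. -/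
theorem stmt1 (H : Type) [Group H] [Finite H]
    (U E V : Type) [NormedAddCommGroup U] [InnerProductSpace ℝ U] [FiniteDimensional ℝ U]
    [NormedAddCommGroup E] [InnerProductSpace ℝ E] [FiniteDimensional ℝ E]
    [NormedAddCommGroup V] [InnerProductSpace ℝ V] [FiniteDimensional ℝ V]
    (hE : Module.finrank ℝ E = 1)
    (ρU : H →* (U ≃ₗᵢ[ℝ] U)) (ρE : H →* (E ≃ₗᵢ[ℝ] E)) (ρV : H →* (V ≃ₗᵢ[ℝ] V)) :
    ∃ φ : SphereBundle U E V ≃ₜ MorSum U E V,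
      (∀ (p : SphereBundle U E V) (u : U) (e : E),
        (φ p).1 ((WithLp.equiv 2 (U × E)).symm (u, e)) = p.1.1 u + p.1.2 e) ∧
      (∀ (h : H) (p q : SphereBundle U E V),
        (∀ u : U, q.1.1 u = ρV h (p.1.1 (ρU h⁻¹ u))) →
        (∀ e : E, q.1.2 e = ρV h (p.1.2 (ρE h⁻¹ e))) →
        ∀ (u : U) (e : E),
          (φ q).1 ((WithLp.equiv 2 (U × E)).symm (u, e)) =
            ρV h ((φ p).1 ((WithLp.equiv 2 (U × E)).symm (ρU h⁻¹ u, ρE h⁻¹ e)))) := by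
  classical
  have formula : ∀ (p : (U →L[ℝ] V) × (E →L[ℝ] V)) (u : U) (e : E),
      toMorL p ((WithLp.equiv 2 (U × E)).symm (u, e)) = p.1 u + p.2 e := by
    intro p u e
    rw [toMorL_apply]
    simp [WithLp.equiv_symm_apply]
  refine ⟨⟨⟨fun p => ⟨toMorL p.1, toMorL_isometry p.1 p.2.1 p.2.2.1 p.2.2.2⟩,
      fun F => ⟨fromMorL F.1, fromMorL_mem F.1 F.2⟩, ?_, ?_⟩, ?_, ?_⟩, ?_, ?_⟩
  · -- left inverse
    rintro ⟨p, hp⟩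
    ext : 2
    · ext u
      show (fromMorL (toMorL p)).1 u = p.1 u
      rw [fromMorL_fst, formula]
      simp
    · ext e
      show (fromMorL (toMorL p)).2 e = p.2 e
      rw [fromMorL_snd, formula]
      simp
  · -- right inverse
    rintro ⟨F, hF⟩
    ext x
    show toMorL (fromMorL F) x = F x
    rw [toMorL_apply, fromMorL_fst, fromMorL_snd, ← map_add]
    congr 1
    exact (decomp x).symm
  · exact Continuous.subtype_mk (((toMorL (U:=U) (E:=E) (V:=V)).continuous_of_finiteDimensional).comp
      continuous_subtype_val) _
  · exact Continuous.subtype_mk (((fromMorL (U:=U) (E:=E) (V:=V)).continuous_of_finiteDimensional).comp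
      continuous_subtype_val) _
  · intro p u e
    exact formula p.1 u e
  · intro h p q hqU hqE u e
    show toMorL q.1 _ = ρV h (toMorL p.1 _)
    rw [formula, formula, hqU, hqE, map_add]
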